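/- There is no nonlinear null curve of degree 5 in the quadric Q³: if G : Fin 5 → ℂ[X] is a null curve (i.e. G₀·G₄ − G₁² − G₂² − G₃² = 0 and G₀'·G₄' − (G₁')² − (G₂')² − (G₃')² = 0) whose components span a ℂ-subspace of ℂ[X] of dimension at least 3 and satisfy gcd(G₀,…,G₄) = 1, then max_a natDegree(G_a) ≠ 5. -/

import Mathlib

open Polynomial Matrix

/-- A tuple `G : Fin 5 → ℂ[X]` is a null curve in the quadric
`Q³ = {X₀X₄ = X₁² + X₂² + X₃²} ⊂ P⁴`. -/
def IsNullCurve (G : Fin 5 → ℂ[X]) : Prop :=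
  G 0 * G 4 - G 1 ^ 2 - G 2 ^ 2 - G 3 ^ 2 = 0 ∧
  derivative (G 0) * derivative (G 4) - derivative (G 1) ^ 2 -
    derivative (G 2) ^ 2 - derivative (G 3) ^ 2 = 0

/-- The linear equivalence `x ↦ Bx` associated to the (scaled) quadric bilinear form. -/
noncomputable def nullBeq : (Fin 5 → ℂ) ≃ₗ[ℂ] (Fin 5 → ℂ) where
  toFun x := ![x 4, -2 * x 1, -2 * x 2, -2 * x 3, x 0]
  invFun y := ![y 4, -(y 1) / 2, -(y 2) / 2, -(y 3) / 2, y 0]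
  map_add' x y := by
    funext i
    fin_cases i <;> simp <;> ring
  map_smul' m x := by
    funext i
    fin_cases i <;> simp <;> ring
  left_inv x := by
    funext i
    fin_cases i <;> simp <;> ring
  right_inv y := by
    funext i
    fin_cases i <;> simp <;> ring

lemma nullBeq_apply (x : Fin 5 → ℂ) :
    nullBeq x = ![x 4, -2 * x 1, -2 * x 2, -2 * x 3, x 0] := rfl

/-- Six pairwise `b`-orthogonal isotropic vectors in `ℂ⁵` (the rows of `T`) span a totally
isotropic subspace, hence `T` has rank at most 2. -/
lemma null_iso_rank_le_two (T : Matrix (Fin 6) (Fin 5) ℂ)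
    (hB : ∀ k l : Fin 6, T k 0 * T l 4 + T k 4 * T l 0
      - 2 * (T k 1 * T l 1 + T k 2 * T l 2 + T k 3 * T l 3) = 0) : T.rank ≤ 2 := by
  have hsub : ∀ d : Fin 6 → ℂ,
      nullBeq (Matrix.mulVecLin Tᵀ d) ∈ LinearMap.ker (Matrix.mulVecLin T) := by
    intro d
    rw [LinearMap.mem_ker]
    funext k
    have expand : Matrix.mulVecLin T (nullBeq (Matrix.mulVecLin Tᵀ d)) k
        = ∑ l : Fin 6, d l * (T k 0 * T l 4 + T k 4 * T l 0
          - 2 * (T k 1 * T l 1 + T k 2 * T l 2 + T k 3 * T l 3)) := by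
      simp only [Matrix.mulVecLin_apply, Matrix.mulVec, dotProduct, nullBeq_apply,
        Matrix.transpose_apply, Fin.sum_univ_five, Fin.sum_univ_six]
      simp only [Matrix.cons_val_zero, Matrix.cons_val_one, Matrix.head_cons,
        Matrix.cons_val_two, Matrix.tail_cons, Matrix.cons_val_three, Matrix.cons_val_four]
      ring
    rw [expand]
    rw [show (0 : Fin 6 → ℂ) k = 0 from rfl]
    exact Finset.sum_eq_zero fun l _ => by rw [hB k l, mul_zero]
  have hmaple : Submodule.map (nullBeq.toLinearMap) (LinearMap.range (Matrix.mulVecLin Tᵀ))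
      ≤ LinearMap.ker (Matrix.mulVecLin T) := by
    rw [Submodule.map_le_iff_le_comap]
    rintro y ⟨d, rfl⟩
    exact hsub d
  have h2 : Tᵀ.rank ≤ Module.finrank ℂ (LinearMap.ker (Matrix.mulVecLin T)) := by
    have e1 : Tᵀ.rank = Module.finrank ℂ (LinearMap.range (Matrix.mulVecLin Tᵀ)) := rfl
    rw [e1, ← LinearEquiv.finrank_map_eq nullBeq (LinearMap.range (Matrix.mulVecLin Tᵀ))]
    exact Submodule.finrank_mono hmaple
  have h3 := LinearMap.finrank_range_add_finrank_ker (Matrix.mulVecLin T)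
  have h4 : Module.finrank ℂ (Fin 5 → ℂ) = 5 := by
    simp [Module.finrank_pi]
  have h5 : Tᵀ.rank = T.rank := Matrix.rank_transpose T
  have h6 : T.rank = Module.finrank ℂ (LinearMap.range (Matrix.mulVecLin T)) := rfl
  omega

set_option maxHeartbeats 4000000 in
/-- There is no nonlinear null curve of degree `5` in `Q³`. -/
theorem no_nonlinear_null_curve_of_degree_five (G : Fin 5 → ℂ[X])
    (hnull : IsNullCurve G)
    (hgcd : Finset.univ.gcd G = 1)
    (hspan : 3 ≤ Module.finrank ℂ ↥(Submodule.span ℂ (Set.range G))) :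
    Finset.univ.sup (fun a => (G a).natDegree) ≠ 5 := by
  intro h5
  obtain ⟨hnull1, hnull2⟩ := hnull
  have hdeg : ∀ a : Fin 5, (G a).natDegree ≤ 5 := by
    intro a
    calc (G a).natDegree ≤ Finset.univ.sup (fun a => (G a).natDegree) :=
          Finset.le_sup (f := fun a => (G a).natDegree) (Finset.mem_univ a)
      _ = 5 := h5
  have hbig : ∀ (a : Fin 5) (k : ℕ), 5 < k → (G a).coeff k = 0 := fun a k hk =>
    coeff_eq_zero_of_natDegree_lt (lt_of_le_of_lt (hdeg a) hk)
  have hz6 : ∀ a : Fin 5, (G a).coeff 6 = 0 := fun a => hbig a 6 (by norm_num)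
  have hz7 : ∀ a : Fin 5, (G a).coeff 7 = 0 := fun a => hbig a 7 (by norm_num)
  have hz8 : ∀ a : Fin 5, (G a).coeff 8 = 0 := fun a => hbig a 8 (by norm_num)
  have hz9 : ∀ a : Fin 5, (G a).coeff 9 = 0 := fun a => hbig a 9 (by norm_num)
  have hz10 : ∀ a : Fin 5, (G a).coeff 10 = 0 := fun a => hbig a 10 (by norm_num)
  have key1 : ∀ n : ℕ, ∑ k ∈ Finset.range (n+1),
      ((G 0).coeff k * (G 4).coeff (n-k) - (G 1).coeff k * (G 1).coeff (n-k)
        - (G 2).coeff k * (G 2).coeff (n-k) - (G 3).coeff k * (G 3).coeff (n-k)) = 0 := by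
    intro n
    have hco := congrArg (fun p => Polynomial.coeff p n) hnull1
    simp only [coeff_sub, coeff_zero, sq, coeff_mul,
      Finset.Nat.sum_antidiagonal_eq_sum_range_succ_mk] at hco
    simpa only [Finset.sum_sub_distrib] using hco
  have key2 : ∀ n : ℕ, ∑ k ∈ Finset.range (n+1),
      ((G 0).coeff (k+1) * ((k:ℂ)+1) * ((G 4).coeff (n-k+1) * (((n-k:ℕ):ℂ)+1))
       - (G 1).coeff (k+1) * ((k:ℂ)+1) * ((G 1).coeff (n-k+1) * (((n-k:ℕ):ℂ)+1))
       - (G 2).coeff (k+1) * ((k:ℂ)+1) * ((G 2).coeff (n-k+1) * (((n-k:ℕ):ℂ)+1))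
       - (G 3).coeff (k+1) * ((k:ℂ)+1) * ((G 3).coeff (n-k+1) * (((n-k:ℕ):ℂ)+1))) = 0 := by
    intro n
    have hco := congrArg (fun p => Polynomial.coeff p n) hnull2
    simp only [coeff_sub, coeff_zero, sq, coeff_mul, coeff_derivative,
      Finset.Nat.sum_antidiagonal_eq_sum_range_succ_mk] at hco
    simpa only [Finset.sum_sub_distrib] using hco
  have e1_0 := key1 0
  have e1_1 := key1 1
  have e1_2 := key1 2
  have e1_3 := key1 3
  have e1_4 := key1 4
  have e1_5 := key1 5
  have e1_6 := key1 6
  have e1_7 := key1 7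
  have e1_8 := key1 8
  have e1_9 := key1 9
  have e1_10 := key1 10
  have e2_0 := key2 0
  have e2_1 := key2 1
  have e2_2 := key2 2
  have e2_3 := key2 3
  have e2_4 := key2 4
  have e2_5 := key2 5
  have e2_6 := key2 6
  norm_num [Finset.sum_range_succ] at e1_0 e1_1 e1_2 e1_3 e1_4 e1_5 e1_6 e1_7 e1_8 e1_9 e1_10 e2_0 e2_1 e2_2 e2_3 e2_4 e2_5 e2_6
  simp only [hz6, hz7, hz8, hz9, hz10, mul_zero, zero_mul, sub_zero, zero_sub,
    add_zero, zero_add, neg_zero, neg_eq_zero] at e1_0 e1_1 e1_2 e1_3 e1_4 e1_5 e1_6 e1_7 e1_8 e1_9 e1_10 e2_0 e2_1 e2_2 e2_3 e2_4 e2_5 e2_6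
  obtain ⟨r, hr⟩ : ∃ x : ℂ, x = (G 0).coeff 2 * (G 4).coeff 2 + (G 4).coeff 2 * (G 0).coeff 2 - 2 * ((G 1).coeff 2 * (G 1).coeff 2 + (G 2).coeff 2 * (G 2).coeff 2 + (G 3).coeff 2 * (G 3).coeff 2) := ⟨_, rfl⟩
  obtain ⟨s, hs⟩ : ∃ x : ℂ, x = (G 0).coeff 3 * (G 4).coeff 3 + (G 4).coeff 3 * (G 0).coeff 3 - 2 * ((G 1).coeff 3 * (G 1).coeff 3 + (G 2).coeff 3 * (G 2).coeff 3 + (G 3).coeff 3 * (G 3).coeff 3) := ⟨_, rfl⟩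
  obtain ⟨u, hu⟩ : ∃ x : ℂ, x = (G 0).coeff 2 * (G 4).coeff 3 + (G 4).coeff 2 * (G 0).coeff 3 - 2 * ((G 1).coeff 2 * (G 1).coeff 3 + (G 2).coeff 2 * (G 2).coeff 3 + (G 3).coeff 2 * (G 3).coeff 3) := ⟨_, rfl⟩
  have hB00 : (G 0).coeff 0 * (G 4).coeff 0 + (G 4).coeff 0 * (G 0).coeff 0 - 2 * ((G 1).coeff 0 * (G 1).coeff 0 + (G 2).coeff 0 * (G 2).coeff 0 + (G 3).coeff 0 * (G 3).coeff 0) = 0 := by linear_combination 2 * e1_0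
  have hB01 : (G 0).coeff 0 * (G 4).coeff 1 + (G 4).coeff 0 * (G 0).coeff 1 - 2 * ((G 1).coeff 0 * (G 1).coeff 1 + (G 2).coeff 0 * (G 2).coeff 1 + (G 3).coeff 0 * (G 3).coeff 1) = 0 := by linear_combination e1_1
  have hB11 : (G 0).coeff 1 * (G 4).coeff 1 + (G 4).coeff 1 * (G 0).coeff 1 - 2 * ((G 1).coeff 1 * (G 1).coeff 1 + (G 2).coeff 1 * (G 2).coeff 1 + (G 3).coeff 1 * (G 3).coeff 1) = 0 := by linear_combination 2 * e2_0
  have hB02 : (G 0).coeff 0 * (G 4).coeff 2 + (G 4).coeff 0 * (G 0).coeff 2 - 2 * ((G 1).coeff 0 * (G 1).coeff 2 + (G 2).coeff 0 * (G 2).coeff 2 + (G 3).coeff 0 * (G 3).coeff 2) = 0 := by linear_combination e1_2 - e2_0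
  have hB12 : (G 0).coeff 1 * (G 4).coeff 2 + (G 4).coeff 1 * (G 0).coeff 2 - 2 * ((G 1).coeff 1 * (G 1).coeff 2 + (G 2).coeff 1 * (G 2).coeff 2 + (G 3).coeff 1 * (G 3).coeff 2) = 0 := by linear_combination (1/2) * e2_1
  have hB03 : (G 0).coeff 0 * (G 4).coeff 3 + (G 4).coeff 0 * (G 0).coeff 3 - 2 * ((G 1).coeff 0 * (G 1).coeff 3 + (G 2).coeff 0 * (G 2).coeff 3 + (G 3).coeff 0 * (G 3).coeff 3) = 0 := by linear_combination e1_3 - (1/2) * e2_1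
  have hB13 : (G 0).coeff 1 * (G 4).coeff 3 + (G 4).coeff 1 * (G 0).coeff 3 - 2 * ((G 1).coeff 1 * (G 1).coeff 3 + (G 2).coeff 1 * (G 2).coeff 3 + (G 3).coeff 1 * (G 3).coeff 3) = -(2/3) * r := by linear_combination (1/3) * e2_2 + (2/3) * hr
  have hB04 : (G 0).coeff 0 * (G 4).coeff 4 + (G 4).coeff 0 * (G 0).coeff 4 - 2 * ((G 1).coeff 0 * (G 1).coeff 4 + (G 2).coeff 0 * (G 2).coeff 4 + (G 3).coeff 0 * (G 3).coeff 4) = (1/6) * r := by linear_combination e1_4 - (1/3) * e2_2 - (1/6) * hr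
  have hB14 : (G 0).coeff 1 * (G 4).coeff 4 + (G 4).coeff 1 * (G 0).coeff 4 - 2 * ((G 1).coeff 1 * (G 1).coeff 4 + (G 2).coeff 1 * (G 2).coeff 4 + (G 3).coeff 1 * (G 3).coeff 4) = -(3/2) * u := by linear_combination (1/4) * e2_3 + (3/2) * hu
  have hB05 : (G 0).coeff 0 * (G 4).coeff 5 + (G 4).coeff 0 * (G 0).coeff 5 - 2 * ((G 1).coeff 0 * (G 1).coeff 5 + (G 2).coeff 0 * (G 2).coeff 5 + (G 3).coeff 0 * (G 3).coeff 5) = (1/2) * u := by linear_combination e1_5 - (1/4) * e2_3 - (1/2) * hu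
  have hB24 : (G 0).coeff 2 * (G 4).coeff 4 + (G 4).coeff 2 * (G 0).coeff 4 - 2 * ((G 1).coeff 2 * (G 1).coeff 4 + (G 2).coeff 2 * (G 2).coeff 4 + (G 3).coeff 2 * (G 3).coeff 4) = -(2/3) * s := by linear_combination (1/3) * e2_4 - (5/3) * e1_6 + (2/3) * hs
  have hB15 : (G 0).coeff 1 * (G 4).coeff 5 + (G 4).coeff 1 * (G 0).coeff 5 - 2 * ((G 1).coeff 1 * (G 1).coeff 5 + (G 2).coeff 1 * (G 2).coeff 5 + (G 3).coeff 1 * (G 3).coeff 5) = (1/6) * s := by linear_combination (8/3) * e1_6 - (1/3) * e2_4 - (1/6) * hs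
  have hB25 : (G 0).coeff 2 * (G 4).coeff 5 + (G 4).coeff 2 * (G 0).coeff 5 - 2 * ((G 1).coeff 2 * (G 1).coeff 5 + (G 2).coeff 2 * (G 2).coeff 5 + (G 3).coeff 2 * (G 3).coeff 5) = 0 := by linear_combination 6 * e1_7 - (1/2) * e2_5
  have hB34 : (G 0).coeff 3 * (G 4).coeff 4 + (G 4).coeff 3 * (G 0).coeff 4 - 2 * ((G 1).coeff 3 * (G 1).coeff 4 + (G 2).coeff 3 * (G 2).coeff 4 + (G 3).coeff 3 * (G 3).coeff 4) = 0 := by linear_combination (1/2) * e2_5 - 5 * e1_7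
  have hB35 : (G 0).coeff 3 * (G 4).coeff 5 + (G 4).coeff 3 * (G 0).coeff 5 - 2 * ((G 1).coeff 3 * (G 1).coeff 5 + (G 2).coeff 3 * (G 2).coeff 5 + (G 3).coeff 3 * (G 3).coeff 5) = 0 := by linear_combination 16 * e1_8 - e2_6
  have hB44 : (G 0).coeff 4 * (G 4).coeff 4 + (G 4).coeff 4 * (G 0).coeff 4 - 2 * ((G 1).coeff 4 * (G 1).coeff 4 + (G 2).coeff 4 * (G 2).coeff 4 + (G 3).coeff 4 * (G 3).coeff 4) = 0 := by linear_combination 2 * e2_6 - 30 * e1_8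
  have hB45 : (G 0).coeff 4 * (G 4).coeff 5 + (G 4).coeff 4 * (G 0).coeff 5 - 2 * ((G 1).coeff 4 * (G 1).coeff 5 + (G 2).coeff 4 * (G 2).coeff 5 + (G 3).coeff 4 * (G 3).coeff 5) = 0 := by linear_combination e1_9
  have hB55 : (G 0).coeff 5 * (G 4).coeff 5 + (G 4).coeff 5 * (G 0).coeff 5 - 2 * ((G 1).coeff 5 * (G 1).coeff 5 + (G 2).coeff 5 * (G 2).coeff 5 + (G 3).coeff 5 * (G 3).coeff 5) = 0 := by linear_combination 2 * e1_10
  have hnli : ¬ LinearIndependent ℂ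
      (![(fun a : Fin 5 => (G a).coeff 0), (fun a => (G a).coeff 1), (fun a => (G a).coeff 2),
         (fun a => (G a).coeff 3), (fun a => (G a).coeff 4), (fun a => (G a).coeff 5)] :
        Fin 6 → (Fin 5 → ℂ)) := by
    intro hli
    have hcard := hli.fintype_card_le_finrank
    simp [Module.finrank_pi] at hcard
  obtain ⟨p, hp, i, hpi⟩ := Fintype.not_linearIndependent_iff.mp hnli
  have ha : ∀ a : Fin 5,
      p 0 * (G a).coeff 0 + p 1 * (G a).coeff 1 + p 2 * (G a).coeff 2 + p 3 * (G a).coeff 3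
        + p 4 * (G a).coeff 4 + p 5 * (G a).coeff 5 = 0 := by
    intro a
    have h := congrFun hp a
    simp only [Fin.sum_univ_six, Pi.add_apply, Pi.smul_apply, smul_eq_mul, Pi.zero_apply,
      Matrix.cons_val_zero, Matrix.cons_val_one, Matrix.head_cons, Matrix.cons_val_two,
      Matrix.tail_cons, Matrix.cons_val_three, Matrix.cons_val_four, Finset.sum_apply,
      show (5:Fin 6) = (4:Fin 5).succ from rfl, Matrix.cons_val_succ] at h
    simp only [show Fin.succ (4:Fin 5) = (5:Fin 6) from rfl] at h
    linear_combination h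
  have L5 : 3*u*p 0 + s*p 1 = 0 := by linear_combination (6:ℂ) * (G 0).coeff 5 * ha 4 + (6:ℂ) * (G 4).coeff 5 * ha 0 - (12:ℂ) * (G 1).coeff 5 * ha 1 - (12:ℂ) * (G 2).coeff 5 * ha 2 - (12:ℂ) * (G 3).coeff 5 * ha 3 - (6:ℂ) * p 0 * hB05 - (6:ℂ) * p 1 * hB15 - (6:ℂ) * p 2 * hB25 - (6:ℂ) * p 3 * hB35 - (6:ℂ) * p 4 * hB45 - (6:ℂ) * p 5 * hB55
  have L4 : r*p 0 - 9*u*p 1 - 4*s*p 2 = 0 := by linear_combination (6:ℂ) * (G 0).coeff 4 * ha 4 + (6:ℂ) * (G 4).coeff 4 * ha 0 - (12:ℂ) * (G 1).coeff 4 * ha 1 - (12:ℂ) * (G 2).coeff 4 * ha 2 - (12:ℂ) * (G 3).coeff 4 * ha 3 - (6:ℂ) * p 0 * hB04 - (6:ℂ) * p 1 * hB14 - (6:ℂ) * p 2 * hB24 - (6:ℂ) * p 3 * hB34 - (6:ℂ) * p 4 * hB44 - (6:ℂ) * p 5 * hB45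
  have L3 : -2*r*p 1 + 3*u*p 2 + 3*s*p 3 = 0 := by linear_combination (3:ℂ) * (G 0).coeff 3 * ha 4 + (3:ℂ) * (G 4).coeff 3 * ha 0 - (6:ℂ) * (G 1).coeff 3 * ha 1 - (6:ℂ) * (G 2).coeff 3 * ha 2 - (6:ℂ) * (G 3).coeff 3 * ha 3 - (3:ℂ) * p 0 * hB03 - (3:ℂ) * p 1 * hB13 + (3:ℂ) * p 2 * hu + (3:ℂ) * p 3 * hs - (3:ℂ) * p 4 * hB34 - (3:ℂ) * p 5 * hB35
  have L2 : 3*r*p 2 + 3*u*p 3 - 2*s*p 4 = 0 := by linear_combination (3:ℂ) * (G 0).coeff 2 * ha 4 + (3:ℂ) * (G 4).coeff 2 * ha 0 - (6:ℂ) * (G 1).coeff 2 * ha 1 - (6:ℂ) * (G 2).coeff 2 * ha 2 - (6:ℂ) * (G 3).coeff 2 * ha 3 - (3:ℂ) * p 0 * hB02 - (3:ℂ) * p 1 * hB12 + (3:ℂ) * p 2 * hr + (3:ℂ) * p 3 * hu - (3:ℂ) * p 4 * hB24 - (3:ℂ) * p 5 * hB25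
  have L1 : -4*r*p 3 - 9*u*p 4 + s*p 5 = 0 := by linear_combination (6:ℂ) * (G 0).coeff 1 * ha 4 + (6:ℂ) * (G 4).coeff 1 * ha 0 - (12:ℂ) * (G 1).coeff 1 * ha 1 - (12:ℂ) * (G 2).coeff 1 * ha 2 - (12:ℂ) * (G 3).coeff 1 * ha 3 - (6:ℂ) * p 0 * hB01 - (6:ℂ) * p 1 * hB11 - (6:ℂ) * p 2 * hB12 - (6:ℂ) * p 3 * hB13 - (6:ℂ) * p 4 * hB14 - (6:ℂ) * p 5 * hB15
  have L0 : r*p 4 + 3*u*p 5 = 0 := by linear_combination (6:ℂ) * (G 0).coeff 0 * ha 4 + (6:ℂ) * (G 4).coeff 0 * ha 0 - (12:ℂ) * (G 1).coeff 0 * ha 1 - (12:ℂ) * (G 2).coeff 0 * ha 2 - (12:ℂ) * (G 3).coeff 0 * ha 3 - (6:ℂ) * p 0 * hB00 - (6:ℂ) * p 1 * hB01 - (6:ℂ) * p 2 * hB02 - (6:ℂ) * p 3 * hB03 - (6:ℂ) * p 4 * hB04 - (6:ℂ) * p 5 * hB05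
  by_cases hs0 : s = 0
  · by_cases hu0 : u = 0
    · by_cases hr0 : r = 0
      · -- totally isotropic case: contradicts `hspan`
        set T : Matrix (Fin 6) (Fin 5) ℂ := Matrix.of
          (![(fun a : Fin 5 => (G a).coeff 0), (fun a => (G a).coeff 1), (fun a => (G a).coeff 2),
             (fun a => (G a).coeff 3), (fun a => (G a).coeff 4), (fun a => (G a).coeff 5)] :
            Fin 6 → (Fin 5 → ℂ)) with hT
        have hBall : ∀ k l : Fin 6, T k 0 * T l 4 + T k 4 * T l 0
            - 2 * (T k 1 * T l 1 + T k 2 * T l 2 + T k 3 * T l 3) = 0 := by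
          intro k l
          fin_cases k <;> fin_cases l <;>
            simp only [hT, Matrix.of_apply, Matrix.cons_val_zero, Matrix.cons_val_one,
              Matrix.head_cons, Matrix.cons_val_two, Matrix.tail_cons, Matrix.cons_val_three,
              Matrix.cons_val_four, Fin.mk_zero, Fin.mk_one,
              show (⟨2, by norm_num⟩ : Fin 6) = 2 from rfl,
              show (⟨3, by norm_num⟩ : Fin 6) = 3 from rfl,
              show (⟨4, by norm_num⟩ : Fin 6) = 4 from rfl,
              show (⟨5, by norm_num⟩ : Fin 6) = (4:Fin 5).succ from rfl,
              Matrix.cons_val_succ] <;>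
            first
            | linear_combination hB00
            | linear_combination hB01
            | linear_combination hB02
            | linear_combination hB03
            | linear_combination hB04 + (1/6) * hr0
            | linear_combination hB05 + (1/2) * hu0
            | linear_combination hB11
            | linear_combination hB12
            | linear_combination hB13 - (2/3) * hr0
            | linear_combination hB14 - (3/2) * hu0
            | linear_combination hB15 + (1/6) * hs0
            | linear_combination hr0 - hr
            | linear_combination hu0 - hu
            | linear_combination hB24 - (2/3) * hs0
            | linear_combination hB25
            | linear_combination hs0 - hs
            | linear_combination hB34
            | linear_combination hB35
            | linear_combination hB44
            | linear_combination hB45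
            | linear_combination hB55
        have hrankT : T.rank ≤ 2 := null_iso_rank_le_two T hBall
        have hkerle : LinearMap.ker (Matrix.mulVecLin T) ≤
            LinearMap.ker (Fintype.linearCombination ℂ G) := by
          intro x hx
          rw [LinearMap.mem_ker] at hx ⊢
          rw [Fintype.linearCombination_apply]
          ext n
          rw [Polynomial.finset_sum_coeff]
          simp only [Polynomial.coeff_smul, smul_eq_mul, Polynomial.coeff_zero]
          by_cases hn : n ≤ 5
          · interval_cases n
            · simpa [hT, Matrix.mulVec, dotProduct, Fin.sum_univ_five,
                Fin.sum_univ_five, mul_comm] using congrFun hx 0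
            · simpa [hT, Matrix.mulVec, dotProduct, Fin.sum_univ_five,
                mul_comm] using congrFun hx 1
            · simpa [hT, Matrix.mulVec, dotProduct, Fin.sum_univ_five,
                mul_comm] using congrFun hx 2
            · simpa [hT, Matrix.mulVec, dotProduct, Fin.sum_univ_five,
                mul_comm] using congrFun hx 3
            · simpa [hT, Matrix.mulVec, dotProduct, Fin.sum_univ_five,
                mul_comm] using congrFun hx 4
            · simpa [hT, Matrix.mulVec, dotProduct, Fin.sum_univ_five,
                mul_comm, show (5:Fin 6) = (4:Fin 5).succ from rfl,
                Matrix.cons_val_succ] using congrFun hx 5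
          · rw [Finset.sum_eq_zero]
            intro a _
            rw [hbig a n (by omega), mul_zero]
        have hrn1 := LinearMap.finrank_range_add_finrank_ker (Matrix.mulVecLin T)
        have hrn2 := LinearMap.finrank_range_add_finrank_ker
          (Fintype.linearCombination ℂ G)
        have hmono := Submodule.finrank_mono hkerle
        have hrange := Fintype.range_linearCombination (R := ℂ) (v := G)
        rw [hrange] at hrn2
        have hfr : Module.finrank ℂ (Fin 5 → ℂ) = 5 := by simp [Module.finrank_pi]
        have hTr : T.rank = Module.finrank ℂ (LinearMap.range (Matrix.mulVecLin T)) := rfl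
        omega
      · -- u = s = 0, r ≠ 0 : top coefficients vanish, degree drop
        have hq0 : p 0 = 0 := by
          apply mul_left_cancel₀ hr0
          linear_combination L4 + 9 * p 1 * hu0 + 4 * p 2 * hs0
        have hq1 : p 1 = 0 := by
          apply mul_left_cancel₀ hr0
          linear_combination (-1/2) * L3 + (3/2) * p 2 * hu0 + (3/2) * p 3 * hs0
        have hq2 : p 2 = 0 := by
          apply mul_left_cancel₀ hr0
          linear_combination (1/3) * L2 - p 3 * hu0 + (2/3) * p 4 * hs0
        have hq3 : p 3 = 0 := by
          apply mul_left_cancel₀ hr0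
          linear_combination (-1/4) * L1 - (9/4) * p 4 * hu0 + (1/4) * p 5 * hs0
        have hq4 : p 4 = 0 := by
          apply mul_left_cancel₀ hr0
          linear_combination L0 - 3 * p 5 * hu0
        have hp5ne : p 5 ≠ 0 := by
          intro h5p
          exact hpi (by fin_cases i <;> assumption)
        have hc5 : ∀ a : Fin 5, (G a).coeff 5 = 0 := by
          intro a
          have h := ha a
          rw [hq0, hq1, hq2, hq3, hq4] at h
          have h' : p 5 * (G a).coeff 5 = 0 := by linear_combination h
          exact (mul_eq_zero.mp h').resolve_left hp5ne
        have hsup : Finset.univ.sup (fun a => (G a).natDegree) ≤ 4 := by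
          apply Finset.sup_le
          intro a _
          refine natDegree_le_iff_coeff_eq_zero.mpr fun N hN => ?_
          by_cases hN5 : N = 5
          · rw [hN5]; exact hc5 a
          · exact hbig a N (by omega)
        rw [h5] at hsup
        norm_num at hsup
    · -- s = 0, u ≠ 0 : all p components vanish, contradiction
      have hq0 : p 0 = 0 := by
        apply mul_left_cancel₀ hu0
        linear_combination (1/3) * L5 - (1/3) * p 1 * hs0
      have hq1 : p 1 = 0 := by
        apply mul_left_cancel₀ hu0
        linear_combination (-1/9) * L4 + (1/9) * r * hq0 - (4/9) * p 2 * hs0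
      have hq2 : p 2 = 0 := by
        apply mul_left_cancel₀ hu0
        linear_combination (1/3) * L3 + (2/3) * r * hq1 - p 3 * hs0
      have hq3 : p 3 = 0 := by
        apply mul_left_cancel₀ hu0
        linear_combination (1/3) * L2 - r * hq2 + (2/3) * p 4 * hs0
      have hq4 : p 4 = 0 := by
        apply mul_left_cancel₀ hu0
        linear_combination (-1/9) * L1 - (4/9) * r * hq3 + (1/9) * p 5 * hs0
      have hq5 : p 5 = 0 := by
        apply mul_left_cancel₀ hu0
        linear_combination (1/3) * L0 - (1/3) * r * hq4
      exact hpi (by fin_cases i <;> assumption)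
  · -- main case s ≠ 0 : a common root of all components, contradicting gcd = 1
    have hp2' : 4*s^2*p 2 = (r*s + 27*u^2)*p 0 := by
      linear_combination (-s) * L4 - 9*u * L5
    have hp3' : 4*s^3*p 3 = -9*u*(r*s + 3*u^2)*p 0 := by
      linear_combination (4/3)*s^2 * L3 + (8/3)*r*s * L5 - u * hp2'
    have hp4' : 8*s^4*p 4 = (3*r^2*s^2 + 54*r*s*u^2 - 81*u^4)*p 0 := by
      linear_combination (-4)*s^3 * L2 + 3*r*s * hp2' + 3*u * hp3'
    have hp5' : 8*s^5*p 5 = (-45*r^2*s^2*u + 270*r*s*u^3 - 729*u^5)*p 0 := by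
      linear_combination 8*s^4 * L1 + 8*r*s * hp3' + 9*u * hp4'
    have hkey : 3*(r*s - 9*u^2)^3*p 0 = 0 := by
      linear_combination 8*s^5 * L0 - r*s * hp4' - 3*u * hp5'
    have h4s2 : (4:ℂ)*s^2 ≠ 0 := mul_ne_zero (by norm_num) (pow_ne_zero _ hs0)
    have h4s3 : (4:ℂ)*s^3 ≠ 0 := mul_ne_zero (by norm_num) (pow_ne_zero _ hs0)
    have h8s4 : (8:ℂ)*s^4 ≠ 0 := mul_ne_zero (by norm_num) (pow_ne_zero _ hs0)
    have h8s5 : (8:ℂ)*s^5 ≠ 0 := mul_ne_zero (by norm_num) (pow_ne_zero _ hs0)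
    have hp0ne : p 0 ≠ 0 := by
      intro hp00
      have hq1 : p 1 = 0 := by
        apply mul_left_cancel₀ hs0
        linear_combination L5 - 3*u * hp00
      have hq2 : p 2 = 0 := by
        apply mul_left_cancel₀ h4s2
        linear_combination hp2' + (r*s + 27*u^2) * hp00
      have hq3 : p 3 = 0 := by
        apply mul_left_cancel₀ h4s3
        linear_combination hp3' - 9*u*(r*s + 3*u^2) * hp00
      have hq4 : p 4 = 0 := by
        apply mul_left_cancel₀ h8s4
        linear_combination hp4' + (3*r^2*s^2 + 54*r*s*u^2 - 81*u^4) * hp00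
      have hq5 : p 5 = 0 := by
        apply mul_left_cancel₀ h8s5
        linear_combination hp5' + (-45*r^2*s^2*u + 270*r*s*u^3 - 729*u^5) * hp00
      exact hpi (by fin_cases i <;> assumption)
    have hrs : r*s = 9*u^2 := by
      have h1 : (r*s - 9*u^2)^3 = 0 := by
        rcases mul_eq_zero.mp hkey with h3 | h3
        · rcases mul_eq_zero.mp h3 with h4 | h4
          · norm_num at h4
          · exact h4
        · exact absurd h3 hp0ne
      have h2 := pow_eq_zero_iff (n := 3) (by norm_num) |>.mp h1
      linear_combination h2
    obtain ⟨z, hzdef⟩ : ∃ z : ℂ, z = -3*u/s := ⟨_, rfl⟩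
    have hsz : s*z = -3*u := by
      rw [hzdef]
      field_simp
    have hq1 : p 1 = z*p 0 := by
      apply mul_left_cancel₀ hs0
      linear_combination L5 - p 0 * hsz
    have hq2 : p 2 = z^2*p 0 := by
      apply mul_left_cancel₀ h4s2
      linear_combination hp2' + p 0 * hrs - 4*p 0*(s*z - 3*u) * hsz
    have hq3 : p 3 = z^3*p 0 := by
      apply mul_left_cancel₀ h4s3
      linear_combination hp3' - 9*u*p 0 * hrs - 4*p 0*(s^2*z^2 - 3*u*s*z + 9*u^2) * hsz
    have hq4 : p 4 = z^4*p 0 := by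
      apply mul_left_cancel₀ h8s4
      linear_combination hp4' + (3*(r*s + 9*u^2) + 54*u^2)*p 0 * hrs
        - 8*p 0*(s*z - 3*u)*(s^2*z^2 + 9*u^2) * hsz
    have hq5 : p 5 = z^5*p 0 := by
      apply mul_left_cancel₀ h8s5
      linear_combination hp5' + (-45*u*(r*s + 9*u^2) + 270*u^3)*p 0 * hrs
        - 8*p 0*(s^4*z^4 - 3*u*s^3*z^3 + 9*u^2*s^2*z^2 - 27*u^3*s*z + 81*u^4) * hsz
    have hev : ∀ a : Fin 5, (G a).eval z = 0 := by
      intro a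
      have hrange : (G a).eval z = ∑ i ∈ Finset.range 6, (G a).coeff i * z^i :=
        eval_eq_sum_range' (lt_of_le_of_lt (hdeg a) (by norm_num)) z
      have h0 : p 0 * ((G a).eval z) = 0 := by
        rw [hrange]
        simp only [Finset.sum_range_succ, Finset.sum_range_zero]
        linear_combination ha a - (G a).coeff 1 * hq1 - (G a).coeff 2 * hq2
          - (G a).coeff 3 * hq3 - (G a).coeff 4 * hq4 - (G a).coeff 5 * hq5
      exact (mul_eq_zero.mp h0).resolve_left hp0ne
    have hdvd : (X - Polynomial.C z) ∣ (1 : ℂ[X]) := by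
      rw [← hgcd]
      exact Finset.dvd_gcd fun a _ => dvd_iff_isRoot.mpr (hev a)
    exact not_isUnit_X_sub_C z (isUnit_of_dvd_one hdvd)
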